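/- (Finite Ramsey Theorem) For all positive integers r, n, h there exists an integer k such that every r-coloring of the n-element subsets of any set of size at least k contains a monochromatic subset of size h. -/
import Mathlib


/-- Infinite Ramsey theorem on ℕ. -/
theorem ramsey_infinite (n : ℕ) {r : ℕ} (c : Finset ℕ → Fin r) (S : Set ℕ)
    (hS : S.Infinite) :
    ∃ T ⊆ S, T.Infinite ∧ ∃ i : Fin r, ∀ e : Finset ℕ, ↑e ⊆ T → e.card = n → c e = i := by
  induction n generalizing c S with
  | zero =>
    refine ⟨S, le_refl _, hS, c ∅, fun e he hcard => ?_⟩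
    rw [Finset.card_eq_zero] at hcard
    rw [hcard]
  | succ n ih =>
    classical
    have step : ∀ s : {S : Set ℕ // S.Infinite},
        ∃ p : ℕ × Fin r × {S : Set ℕ // S.Infinite},
          p.1 ∈ s.1 ∧ p.2.2.1 ⊆ s.1 ∩ Set.Ioi p.1 ∧
          ∀ e : Finset ℕ, ↑e ⊆ p.2.2.1 → e.card = n → c (insert p.1 e) = p.2.1 := by
      rintro ⟨S, hS⟩
      obtain ⟨a, ha⟩ := hS.nonempty
      have hS' : (S ∩ Set.Ioi a).Infinite := by
        have h1 : S \ (Set.Iic a) = S ∩ Set.Ioi a := by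
          ext x; simp [Set.mem_diff, not_le, Set.mem_Ioi]
        rw [← h1]
        exact hS.diff (Set.finite_Iic a)
      obtain ⟨T, hTsub, hTinf, i, hi⟩ := ih (fun e => c (insert a e)) _ hS'
      exact ⟨⟨a, i, ⟨T, hTinf⟩⟩, ha, hTsub, hi⟩
    choose f hf1 hf2 hf3 using step
    let g : ℕ → {S : Set ℕ // S.Infinite} := fun k => Nat.rec ⟨S, hS⟩ (fun _ s => (f s).2.2) k
    set a : ℕ → ℕ := fun k => (f (g k)).1 with ha
    set idx : ℕ → Fin r := fun k => (f (g k)).2.1 with hidx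
    have hgsucc : ∀ k, (g (k + 1)) = (f (g k)).2.2 := fun k => rfl
    have hmem : ∀ k, a k ∈ (g k).1 := fun k => hf1 (g k)
    have hsub : ∀ k, (g (k + 1)).1 ⊆ (g k).1 ∩ Set.Ioi (a k) := fun k => hf2 (g k)
    have hmono : ∀ k, ∀ e : Finset ℕ, ↑e ⊆ (g (k+1)).1 → e.card = n →
        c (insert (a k) e) = idx k := fun k => hf3 (g k)
    have hdec : ∀ j k, j ≤ k → (g k).1 ⊆ (g j).1 := by
      intro j k hjk
      induction k with
      | zero =>
        have : j = 0 := Nat.le_zero.mp hjk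
        subst this; exact le_refl _
      | succ k ihk =>
        rcases Nat.eq_or_lt_of_le hjk with rfl | hlt
        · exact le_refl _
        · exact ((hsub k).trans Set.inter_subset_left).trans (ihk (Nat.lt_succ_iff.mp hlt))
    have haS : ∀ k, a k ∈ S := fun k => hdec 0 k (Nat.zero_le k) (hmem k)
    have hamem : ∀ j k, j < k → a k ∈ (g (j+1)).1 := fun j k hjk =>
      hdec (j+1) k hjk (hmem k)
    have hastrict : StrictMono a := fun j k hjk => (hsub j (hamem j k hjk)).2
    -- pigeonhole on colors
    obtain ⟨i, hi⟩ := Finite.exists_infinite_fiber idx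
    set I : Set ℕ := idx ⁻¹' {i} with hI
    have hiI : I.Infinite := Set.infinite_coe_iff.mp hi
    refine ⟨a '' I, ?_, hiI.image (hastrict.injective.injOn), i, ?_⟩
    · rintro x ⟨k, -, rfl⟩; exact haS k
    · intro e he hcard
      have hne : e.Nonempty := Finset.card_pos.mp (by omega)
      set m := e.min' hne with hm
      obtain ⟨k, hkI, hkm⟩ := he (e.min'_mem hne)
      set e' := e.erase m with he'
      have hmE : m ∈ e := e.min'_mem hne
      have hins : insert (a k) e' = e := by
        show insert (a k) (e.erase m) = e
        rw [hkm, ← hm]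
        exact Finset.insert_erase hmE
      have hcard' : e'.card = n := by
        rw [he', Finset.card_erase_of_mem hmE, hcard]
        omega
      have he'sub : ↑e' ⊆ (g (k+1)).1 := by
        intro x hx
        have hxe : x ∈ e := Finset.mem_of_mem_erase hx
        obtain ⟨j, hjI, hjx⟩ := he hxe
        have hxne : x ≠ m := Finset.ne_of_mem_erase hx
        have hxgt : m < x := lt_of_le_of_ne (e.min'_le x hxe) (Ne.symm hxne)
        have hjk : k < j := by
          have : a k < a j := by rw [hkm, hjx]; exact hxgt
          exact hastrict.lt_iff_lt.mp this
        rw [← hjx]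
        exact hamem k j hjk
      have hcol : c (insert (a k) e') = idx k := hmono k e' he'sub hcard'
      rw [hins] at hcol
      rw [hcol]
      exact hkI

/-- Finite Ramsey theorem on initial segments of ℕ. -/
theorem ramsey_nat (r n h : ℕ) :
    ∃ k : ℕ, ∀ c : Finset ℕ → Fin r,
      ∃ H : Finset ℕ, H ⊆ Finset.range k ∧ H.card = h ∧
        ∃ i : Fin r, ∀ e ⊆ H, e.card = n → c e = i := by
  classical
  by_contra hcon
  push_neg at hcon
  choose cc hcc using hcon
  -- ultrafilter extending cofinite
  let U : Ultrafilter ℕ := Ultrafilter.of Filter.cofinite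
  have hUcof : (U : Filter ℕ) ≤ Filter.cofinite := Ultrafilter.of_le Filter.cofinite
  -- limit coloring
  have hlim : ∀ e : Finset ℕ, ∃ i : Fin r, {k | cc k e = i} ∈ U := by
    intro e
    by_contra hno
    push_neg at hno
    have hcompl : ∀ i : Fin r, {k | cc k e = i}ᶜ ∈ U := fun i =>
      (Ultrafilter.compl_mem_iff_notMem).mpr (hno i)
    have : (⋂ i : Fin r, {k | cc k e = i}ᶜ) ∈ (U : Filter ℕ) := by
      rw [Filter.iInter_mem]
      exact hcompl
    obtain ⟨k, hk⟩ := Filter.nonempty_of_mem this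
    simp only [Set.mem_iInter, Set.mem_compl_iff, Set.mem_setOf_eq] at hk
    exact hk (cc k e) rfl
  choose D hD using hlim
  obtain ⟨T, -, hTinf, i, hi⟩ := ramsey_infinite n D Set.univ Set.infinite_univ
  obtain ⟨H, hHT, hHcard⟩ := hTinf.exists_subset_card_eq h
  -- all n-subsets of H get color i under D
  have hDi : ∀ e ∈ H.powersetCard n, D e = i := by
    intro e he
    rw [Finset.mem_powersetCard] at he
    exact hi e ((Finset.coe_subset.mpr he.1).trans hHT) he.2
  -- the set of k agreeing with D on n-subsets of H, and with H ⊆ range k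
  have hB : {k | ∀ e ∈ H.powersetCard n, cc k e = i} ∈ U := by
    have : ∀ᶠ k in (U : Filter ℕ), ∀ e ∈ H.powersetCard n, cc k e = i := by
      rw [Filter.eventually_all_finset (H.powersetCard n) (l := (U : Filter ℕ))]
      intro e he
      have h2 := hD e
      rw [hDi e he] at h2
      exact h2
    exact this
  have hC : {k | ∀ x ∈ H, x < k} ∈ U := by
    apply hUcof
    have : ∀ᶠ k in Filter.cofinite, ∀ x ∈ H, x < k := by
      rw [Filter.eventually_all_finset H (l := Filter.cofinite)]
      intro x _
      have h3 : {k | ¬ x < k} = Set.Iic x := by ext y; simp [not_lt]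
      exact Filter.eventually_cofinite.mpr (h3 ▸ Set.finite_Iic x)
    exact this
  obtain ⟨k, hkB, hkC⟩ := Filter.nonempty_of_mem (Filter.inter_mem hB hC)
  have hHk : H ⊆ Finset.range k := fun x hx => Finset.mem_range.mpr (hkC x hx)
  obtain ⟨e, heH, hecard, hene⟩ := hcc k H hHk hHcard i
  exact hene (hkB e (Finset.mem_powersetCard.mpr ⟨heH, hecard⟩))

/-- (Finite Ramsey Theorem) For all positive integers r, n, h there exists an
integer k such that every r-coloring of the n-element subsets of any set of
size at least k contains a monochromatic subset of size h. -/
theorem finite_ramsey (r n h : ℕ) (hr : 0 < r) (hn : 0 < n) (hh : 0 < h) :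
    ∃ k : ℕ,
      ∀ (V : Type) [DecidableEq V] [Fintype V], k ≤ Fintype.card V →
        ∀ c : Finset V → Fin r,
          ∃ H : Finset V, H.card = h ∧
            ∃ i : Fin r, ∀ e ⊆ H, e.card = n → c e = i := by
  classical
  obtain ⟨k, hk⟩ := ramsey_nat r n h
  -- k ≥ h ≥ 1 by applying hk to a constant coloring
  have hkpos : 0 < k := by
    obtain ⟨H, hHk, hHcard, -⟩ := hk (fun _ => ⟨0, hr⟩)
    have : H.card ≤ k := (Finset.card_le_card hHk).trans (by simp)
    omega
  refine ⟨k, fun V _ _ hcard c => ?_⟩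
  -- embedding of Fin k into V
  obtain ⟨φ⟩ : Nonempty (Fin k ↪ V) :=
    Function.Embedding.nonempty_of_card_le (by simpa using hcard)
  let m : ℕ → V := fun x => if hx : x < k then φ ⟨x, hx⟩ else φ ⟨0, hkpos⟩
  have hminj : Set.InjOn m ↑(Finset.range k) := by
    intro x hx y hy hxy
    simp only [Finset.coe_range, Set.mem_Iio] at hx hy
    simp only [m, dif_pos hx, dif_pos hy] at hxy
    exact congrArg Fin.val (φ.injective hxy)
  obtain ⟨H, hHk, hHcard, i, hi⟩ := hk (fun e => c (e.image m))
  have hminjH : Set.InjOn m ↑H := hminj.mono (Finset.coe_subset.mpr hHk)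
  refine ⟨H.image m, by rw [Finset.card_image_of_injOn hminjH, hHcard], i, ?_⟩
  intro e' he' hecard'
  obtain ⟨e, heH, rfl⟩ := Finset.subset_image_iff.mp he'
  have : e.card = n := by
    rw [← Finset.card_image_of_injOn (hminjH.mono (Finset.coe_subset.mpr heH)), hecard']
  exact hi e heH this
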